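/- arXiv:1403.0518 — 2 statements merged into one kernel-verified Lean document; each statement's English description precedes it below -/
import Mathlib

section
/- Let X, Y be Hilbert spaces, w ∈ X, R > 0, and F : B_R(w) → ℝ a C² functional whose second derivative is Lipschitz with constant M, i.e. ‖δ²F(x) − δ²F(y)‖ ≤ M‖x − y‖ for x, y ∈ B_R(w). Suppose there exist μ, r > 0 with ⟨δ²F(w)v, v⟩ ≥ μ‖v‖² for all v, ‖δF(w)‖ ≤ r, and 2Mr/μ² < 1 (and 2r/μ ≤ R). Then there exists w̄ ∈ B_R(w) with δF(w̄) = 0, ‖w − w̄‖ ≤ 2r/μ, and ⟨δ²F(w̄)v, v⟩ ≥ (1 − 2Mr/μ²)μ‖v‖² for all v ∈ X. -/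
open Metric RealInnerProductSpace NNReal

set_option maxHeartbeats 4000000

/-- Quantitative inverse function theorem (Lemma B.1 variant):
existence of a locally unique critical point near an approximate critical point. -/
theorem stmt0 {X : Type*} [NormedAddCommGroup X] [InnerProductSpace ℝ X] [CompleteSpace X]
    (F : X → ℝ) (F' : X → X →L[ℝ] ℝ) (F'' : X → X →L[ℝ] X →L[ℝ] ℝ)
    (w : X) (R M μ r : ℝ) (hR : 0 < R) (hM : 0 ≤ M) (hμ : 0 < μ) (hr : 0 < r)
    (hd1 : ∀ x ∈ ball w R, HasFDerivAt F (F' x) x)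
    (hd2 : ∀ x ∈ ball w R, HasFDerivAt F' (F'' x) x)
    (hLip : ∀ x ∈ ball w R, ∀ y ∈ ball w R, ‖F'' x - F'' y‖ ≤ M * ‖x - y‖)
    (hcoerc : ∀ v : X, μ * ‖v‖ ^ 2 ≤ F'' w v v)
    (hres : ‖F' w‖ ≤ r)
    (hsmall : 2 * M * r / μ ^ 2 < 1) (hRr : 2 * r / μ ≤ R) :
    ∃ wb : X, wb ∈ closedBall w R ∧ F' wb = 0 ∧ ‖w - wb‖ ≤ 2 * r / μ ∧
      ∀ v : X, (1 - 2 * M * r / μ ^ 2) * μ * ‖v‖ ^ 2 ≤ F'' wb v v := by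
  have hμ2 : (0:ℝ) < μ ^ 2 := by positivity
  have h2Mr : 2 * M * r < μ ^ 2 := by
    have := (div_lt_one hμ2).mp hsmall; linarith
  set q : ℝ := Real.sqrt (μ ^ 2 - 2 * M * r) with hqdef
  have hq0 : 0 < q := Real.sqrt_pos.mpr (by linarith)
  have hqsq : q ^ 2 = μ ^ 2 - 2 * M * r := Real.sq_sqrt (by linarith)
  set s : ℝ := μ + q with hsdef
  have hs0 : 0 < s := by positivity
  have hsμ : μ < s := by rw [hsdef]; linarith
  set ρ : ℝ := 2 * r / s with hρdef
  have hρ0 : 0 < ρ := by positivity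
  have hρs : ρ * s = 2 * r := by rw [hρdef]; field_simp
  have hρlt : ρ < 2 * r / μ := by
    rw [hρdef, div_lt_div_iff₀ hs0 hμ]; nlinarith
  have hρR : ρ < R := lt_of_lt_of_le hρlt hRr
  have hskey : s ^ 2 - 2 * μ * s + 2 * M * r = 0 := by nlinarith [hqsq]
  have hkey : μ * ρ = M / 2 * ρ ^ 2 + r := by
    have h1 : ρ ^ 2 * s ^ 2 = 4 * r ^ 2 := by nlinarith [hρs]
    have h2 : (μ * ρ - M / 2 * ρ ^ 2 - r) * s ^ 2 = 0 := by
      linear_combination μ * s * hρs - M / 2 * h1 - r * hskey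
    have := mul_eq_zero.mp h2
    rcases this with h | h
    · linarith
    · exact absurd h (by positivity)
  clear_value q s ρ
  have hsub : closedBall w ρ ⊆ ball w R := closedBall_subset_ball hρR
  have hwB : w ∈ ball w R := mem_ball_self hR
  -- Lax-Milgram
  have hcoB : IsCoercive (F'' w) := by
    refine ⟨μ, hμ, fun u => ?_⟩
    have := hcoerc u; nlinarith [this]
  set E := hcoB.continuousLinearEquivOfBilin with hEdef
  have hEapp : ∀ u v : X, ⟪E u, v⟫ = F'' w u v := fun u v =>
    hcoB.continuousLinearEquivOfBilin_apply u v
  have hlow : ∀ z : X, μ * ‖z‖ ≤ ‖E z‖ := by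
    intro z
    rcases eq_or_ne z 0 with rfl | hz
    · simp
    · have h1 : μ * ‖z‖ ^ 2 ≤ F'' w z z := hcoerc z
      have h2 : ⟪E z, z⟫ ≤ ‖E z‖ * ‖z‖ := real_inner_le_norm _ _
      have hz0 : 0 < ‖z‖ := norm_pos_iff.mpr hz
      rw [hEapp] at h2
      have : μ * ‖z‖ * ‖z‖ ≤ ‖E z‖ * ‖z‖ := by nlinarith
      exact le_of_mul_le_mul_right this hz0
  have hEg : ∀ u : X, (InnerProductSpace.toDual ℝ X).symm (F'' w u) = E u := by
    intro u
    exact hcoB.unique_continuousLinearEquivOfBilin fun v => by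
      rw [InnerProductSpace.toDual_symm_apply]
  clear hEdef
  clear_value E
  set g : X → X := fun x => (InnerProductSpace.toDual ℝ X).symm (F' x) with hgdef
  set T : X → X := fun x => x - E.symm (g x) with hTdef
  -- estimate (A): mean value on the ball
  have hA : ∀ x ∈ closedBall w ρ, ∀ y ∈ closedBall w ρ,
      ‖F' x - F' y - (F'' w) (x - y)‖ ≤ M * ρ * ‖x - y‖ := by
    intro x hx y hy
    refine Convex.norm_image_sub_le_of_norm_hasFDerivWithin_le'
      (f := F') (f' := F'') (φ := F'' w) (s := closedBall w ρ)
      (fun z hz => (hd2 z (hsub hz)).hasFDerivWithinAt) ?_ (convex_closedBall w ρ) hy hx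
    intro z hz
    calc ‖F'' z - F'' w‖ ≤ M * ‖z - w‖ := hLip z (hsub hz) w hwB
      _ ≤ M * ρ := by
        have := mem_closedBall_iff_norm.mp hz
        exact mul_le_mul_of_nonneg_left this hM
  -- estimate (B): Taylor-type with 1/2
  have hB : ∀ x ∈ closedBall w ρ, ‖F' x - F' w - (F'' w) (x - w)‖ ≤ M / 2 * ‖x - w‖ ^ 2 := by
    intro x hx
    set u : X := x - w with hudef
    have hu : ‖u‖ ≤ ρ := mem_closedBall_iff_norm.mp hx
    have hmem : ∀ t : ℝ, t ∈ Set.uIcc (0:ℝ) 1 → w + t • u ∈ ball w R := by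
      intro t ht
      rw [Set.uIcc_of_le (by norm_num : (0:ℝ) ≤ 1)] at ht
      have h1 : ‖t • u‖ = t * ‖u‖ := by
        rw [norm_smul, Real.norm_eq_abs, abs_of_nonneg ht.1]
      rw [mem_ball_iff_norm]
      have : t * ‖u‖ ≤ ρ := by nlinarith [ht.1, ht.2, norm_nonneg u]
      simpa [h1] using lt_of_le_of_lt this hρR
    set ψ' : ℝ → (X →L[ℝ] ℝ) := fun t => (F'' (w + t • u)) u - (F'' w) u with hψ'def
    have hderiv : ∀ t ∈ Set.uIcc (0:ℝ) 1,
        HasDerivAt (fun t : ℝ => F' (w + t • u) - t • ((F'' w) u)) (ψ' t) t := by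
      intro t ht
      have hpath : HasDerivAt (fun t : ℝ => w + t • u) u t := by
        simpa using ((hasDerivAt_id t).smul_const u).const_add w
      have h1 : HasDerivAt (fun t : ℝ => F' (w + t • u)) ((F'' (w + t • u)) u) t :=
        (hd2 _ (hmem t ht)).comp_hasDerivAt t hpath
      have h2 : HasDerivAt (fun t : ℝ => t • ((F'' w) u)) ((F'' w) u) t := by
        simpa using (hasDerivAt_id t).smul_const ((F'' w) u)
      exact h1.sub h2
    have hcontψ' : ContinuousOn ψ' (Set.uIcc (0:ℝ) 1) := by
      have hlipset : LipschitzOnWith (Real.toNNReal M) F'' (ball w R) := by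
        refine LipschitzOnWith.of_dist_le_mul fun a ha b hb => ?_
        simp only [dist_eq_norm, Real.coe_toNNReal M hM]
        exact hLip a ha b hb
      have hpathc : ContinuousOn (fun t : ℝ => w + t • u) (Set.uIcc (0:ℝ) 1) :=
        (continuous_const.add (continuous_id.smul continuous_const)).continuousOn
      have h1 : ContinuousOn (fun t : ℝ => F'' (w + t • u)) (Set.uIcc (0:ℝ) 1) :=
        (hlipset.continuousOn).comp hpathc hmem
      apply ContinuousOn.sub
      · exact (ContinuousLinearMap.apply ℝ (X →L[ℝ] ℝ) u).continuous.comp_continuousOn h1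
      · exact continuousOn_const
    have hint : IntervalIntegrable ψ' MeasureTheory.volume 0 1 :=
      hcontψ'.intervalIntegrable
    have heq : ∫ t in (0:ℝ)..1, ψ' t
        = (F' (w + (1:ℝ) • u) - (1:ℝ) • ((F'' w) u)) - (F' (w + (0:ℝ) • u) - (0:ℝ) • ((F'' w) u)) :=
      intervalIntegral.integral_eq_sub_of_hasDerivAt hderiv hint
    have heq2 : ∫ t in (0:ℝ)..1, ψ' t = F' x - F' w - (F'' w) u := by
      rw [heq]; simp [hudef]; abel
    have hbnd : ‖∫ t in (0:ℝ)..1, ψ' t‖ ≤ |∫ t in (0:ℝ)..1, M * t * ‖u‖ ^ 2| := by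
      apply intervalIntegral.norm_integral_le_abs_of_norm_le
      · filter_upwards [MeasureTheory.ae_restrict_mem measurableSet_uIoc] with t ht
        rw [Set.uIoc_of_le (by norm_num : (0:ℝ) ≤ 1)] at ht
        have hmem' : w + t • u ∈ ball w R := hmem t
          (by rw [Set.uIcc_of_le (by norm_num : (0:ℝ) ≤ 1)]; exact ⟨ht.1.le, ht.2⟩)
        have h1 : ‖ψ' t‖ ≤ ‖F'' (w + t • u) - F'' w‖ * ‖u‖ := by
          have : ψ' t = (F'' (w + t • u) - F'' w) u := by
            simp [hψ'def, ContinuousLinearMap.sub_apply]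
          rw [this]
          exact ContinuousLinearMap.le_opNorm _ u
        have h2 : ‖F'' (w + t • u) - F'' w‖ ≤ M * (t * ‖u‖) := by
          have := hLip (w + t • u) hmem' w hwB
          simpa [norm_smul, Real.norm_eq_abs, abs_of_nonneg ht.1.le] using this
        calc ‖ψ' t‖ ≤ M * (t * ‖u‖) * ‖u‖ := h1.trans
              (mul_le_mul_of_nonneg_right h2 (norm_nonneg u))
          _ = M * t * ‖u‖ ^ 2 := by ring
      · apply Continuous.intervalIntegrable; continuity
    have hval : ∫ t in (0:ℝ)..1, M * t * ‖u‖ ^ 2 = M / 2 * ‖u‖ ^ 2 := by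
      have : (fun t : ℝ => M * t * ‖u‖ ^ 2) = fun t : ℝ => (M * ‖u‖ ^ 2) * t := by
        funext t; ring
      rw [this, intervalIntegral.integral_const_mul, integral_id]
      ring
    have hval' : |∫ t in (0:ℝ)..1, M * t * ‖u‖ ^ 2| = |M / 2 * ‖u‖ ^ 2| := by rw [hval]
    rw [heq2, hval'] at hbnd
    calc ‖F' x - F' w - (F'' w) u‖ ≤ |M / 2 * ‖u‖ ^ 2| := hbnd
      _ = M / 2 * ‖u‖ ^ 2 := abs_of_nonneg (by positivity)
  -- E applied to T-differences
  have hET : ∀ x y : X, E (T x) - E (T y)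
      = (InnerProductSpace.toDual ℝ X).symm ((F'' w) (x - y) - (F' x - F' y)) := by
    intro x y
    have h1 : E (T x) - E (T y) = E (x - y) - (g x - g y) := by
      simp only [hTdef, map_sub, E.apply_symm_apply]
      abel
    rw [h1, ← hEg (x - y)]
    simp [hgdef, map_sub]
  have hcontr : ∀ x ∈ closedBall w ρ, ∀ y ∈ closedBall w ρ,
      μ * ‖T x - T y‖ ≤ M * ρ * ‖x - y‖ := by
    intro x hx y hy
    calc μ * ‖T x - T y‖ ≤ ‖E (T x - T y)‖ := hlow _
      _ = ‖F' x - F' y - (F'' w) (x - y)‖ := by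
          rw [map_sub, hET x y, LinearIsometryEquiv.norm_map, ← norm_neg]
          congr 1; abel
      _ ≤ M * ρ * ‖x - y‖ := hA x hx y hy
  have hmaps : ∀ x ∈ closedBall w ρ, T x ∈ closedBall w ρ := by
    intro x hx
    have h1 : E (T x) - E w = (InnerProductSpace.toDual ℝ X).symm ((F'' w) (x - w) - F' x) := by
      have h2 : E (T x) - E w = E (x - w) - g x := by
        simp only [hTdef, map_sub, E.apply_symm_apply]
        abel
      rw [h2, ← hEg (x - w)]
      simp [hgdef, map_sub]
    have h3 : μ * ‖T x - w‖ ≤ ‖(F'' w) (x - w) - F' x‖ := by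
      calc μ * ‖T x - w‖ ≤ ‖E (T x - w)‖ := hlow _
        _ = ‖(F'' w) (x - w) - F' x‖ := by rw [map_sub, h1, LinearIsometryEquiv.norm_map]
    have h4 : ‖(F'' w) (x - w) - F' x‖ ≤ ‖F' x - F' w - (F'' w) (x - w)‖ + ‖F' w‖ := by
      have : (F'' w) (x - w) - F' x = -((F' x - F' w - (F'' w) (x - w)) + F' w) := by abel
      rw [this, norm_neg]
      exact norm_add_le _ _
    have h5 : ‖F' x - F' w - (F'' w) (x - w)‖ ≤ M / 2 * ‖x - w‖ ^ 2 := hB x hx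
    have hxw : ‖x - w‖ ≤ ρ := mem_closedBall_iff_norm.mp hx
    have h6 : μ * ‖T x - w‖ ≤ M / 2 * ρ ^ 2 + r := by
      have h7 := h3.trans h4
      have h8 : M / 2 * ‖x - w‖ ^ 2 ≤ M / 2 * ρ ^ 2 := by
        have := mul_self_le_mul_self (norm_nonneg (x - w)) hxw
        nlinarith [hM]
      linarith
    rw [mem_closedBall_iff_norm]
    have : μ * ‖T x - w‖ ≤ μ * ρ := by rw [hkey]; linarith
    exact le_of_mul_le_mul_left this hμ
  -- fixed point on the closed ball
  set K : NNReal := Real.toNNReal (M * ρ / μ) with hKdef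
  have hK1 : (K : ENNReal) < 1 := by
    rw [hKdef]
    have : M * ρ / μ < 1 := by
      rw [div_lt_one hμ]
      have e1 : M * ρ * s = 2 * M * r := by rw [mul_assoc, hρs]; ring
      have e2 : M * ρ * s < μ * s := by
        rw [hsdef] at e1 ⊢
        nlinarith [mul_pos hμ hq0]
      exact lt_of_mul_lt_mul_right e2 hs0.le
    exact_mod_cast Real.toNNReal_lt_one.mpr this
  clear_value K
  haveI : Nonempty (closedBall w ρ) := ⟨⟨w, mem_closedBall_self hρ0.le⟩⟩
  haveI : CompleteSpace (closedBall w ρ) := (Metric.isClosed_closedBall).completeSpace_coe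
  set T' : closedBall w ρ → closedBall w ρ := fun p => ⟨T p, hmaps p p.2⟩ with hT'def
  have hcw : ContractingWith K T' := by
    refine ⟨?_, LipschitzWith.of_dist_le_mul fun p q => ?_⟩
    · exact_mod_cast hK1
    · rw [Subtype.dist_eq, Subtype.dist_eq, dist_eq_norm, dist_eq_norm]
      have h := hcontr p p.2 q q.2
      have hKc : (K : ℝ) = M * ρ / μ := by
        rw [hKdef]; exact Real.coe_toNNReal _ (by positivity)
      rw [hKc]
      have hgoal : μ * ‖T (p : X) - T (q : X)‖ ≤ μ * (M * ρ / μ * ‖(p : X) - (q : X)‖) := by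
        have : μ * (M * ρ / μ * ‖(p : X) - (q : X)‖) = M * ρ * ‖(p : X) - (q : X)‖ := by
          field_simp
        rw [this]
        exact h
      exact le_of_mul_le_mul_left hgoal hμ
  obtain ⟨p, hp⟩ : ∃ p : closedBall w ρ, T' p = p :=
    ⟨hcw.fixedPoint T', hcw.fixedPoint_isFixedPt⟩
  set wb : X := (p : X) with hwbdef
  have hwbmem : wb ∈ closedBall w ρ := p.2
  have hTwb : T wb = wb := congrArg Subtype.val hp
  have hgz : g wb = 0 := by
    have h0 : E.symm (g wb) = 0 := by
      have := hTwb
      simp only [hTdef, sub_eq_self] at this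
      exact this
    have := congrArg E h0
    rwa [E.apply_symm_apply, map_zero] at this
  have hF'z : F' wb = 0 := by
    have := congrArg (InnerProductSpace.toDual ℝ X) hgz
    simpa [hgdef] using this
  have h3 : ‖w - wb‖ ≤ ρ := by
    rw [norm_sub_rev]; exact mem_closedBall_iff_norm.mp hwbmem
  refine ⟨wb, ?_, hF'z, ?_, ?_⟩
  · exact closedBall_subset_closedBall hρR.le hwbmem
  · exact h3.trans hρlt.le
  · intro v
    have h1 : μ * ‖v‖ ^ 2 ≤ F'' w v v := hcoerc v
    have hwbB : wb ∈ ball w R := hsub hwbmem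
    have h2 : ‖F'' w - F'' wb‖ ≤ M * ‖w - wb‖ := hLip w hwB wb hwbB
    have h4 : F'' w v v - F'' wb v v ≤ M * ρ * ‖v‖ ^ 2 := by
      have e : F'' w v v - F'' wb v v = ((F'' w - F'' wb) v) v := by
        simp [ContinuousLinearMap.sub_apply]
      have b1 : ‖((F'' w - F'' wb) v) v‖ ≤ ‖(F'' w - F'' wb) v‖ * ‖v‖ :=
        ((F'' w - F'' wb) v).le_opNorm v
      have b2 : ‖(F'' w - F'' wb) v‖ ≤ ‖F'' w - F'' wb‖ * ‖v‖ :=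
        (F'' w - F'' wb).le_opNorm v
      have b3 : ((F'' w - F'' wb) v) v ≤ ‖((F'' w - F'' wb) v) v‖ := le_abs_self _
      rw [e]
      nlinarith [norm_nonneg v, norm_nonneg ((F'' w - F'' wb) v), hM, hρ0,
        mul_le_mul_of_nonneg_right b2 (norm_nonneg v),
        mul_le_mul_of_nonneg_right h2 (mul_nonneg (norm_nonneg v) (norm_nonneg v)),
        mul_le_mul_of_nonneg_left h3 hM]
    have hdiv : (1 - 2 * M * r / μ ^ 2) * μ = μ - 2 * M * r / μ := by
      field_simp
    have hMρ : M * ρ ≤ 2 * M * r / μ := by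
      have := mul_le_mul_of_nonneg_left hρlt.le hM
      calc M * ρ ≤ M * (2 * r / μ) := this
        _ = 2 * M * r / μ := by ring
    rw [hdiv]
    nlinarith [sq_nonneg ‖v‖, mul_le_mul_of_nonneg_right hMρ (sq_nonneg ‖v‖)]
end

section
/- Let U ⊂ ℝ² be a bounded convex polygon, x' ∈ int(U), and let Ψ ∈ H²(U) be the harmonic function solving ΔΨ = 0 in U with Dirichlet data Ψ(s) = −(1/2π) log|s − x'| on ∂U. If Ψ* is a harmonic conjugate of Ψ on U (so ∇Ψ* = R∇Ψ where R is rotation by π/2), then Ψ* satisfies the Neumann condition ∂Ψ*/∂ν = −∇ŷ(· − x')·ν on ∂U, where ŷ(x) = (1/2π) arg(x) and ν is the outward unit normal. -/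
noncomputable section
open Real Metric RealInnerProductSpace

abbrev E2 := EuclideanSpace ℝ (Fin 2)

/-- Rotation by π/2 (the matrix R₄). -/
def rotQ (w : E2) : E2 := WithLp.toLp 2 ![-(w 1), w 0]

/-- The smooth extension of ∇ŷ, ŷ(x) = (1/2π) arg(x). -/
def gyhat (x : E2) : E2 := (2 * π * ‖x‖ ^ 2)⁻¹ • (WithLp.toLp 2 ![-(x 1), x 0] : E2)

lemma inner_expand (a b : E2) : ⟪a, b⟫ = a 0 * b 0 + a 1 * b 1 := by
  simp [PiLp.inner_apply, Fin.sum_univ_two]; ring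

lemma gyhat_inner (x v : E2) :
    ⟪gyhat x, v⟫ = (2 * π * ‖x‖ ^ 2)⁻¹ * (-(x 1) * v 0 + x 0 * v 1) := by
  rw [inner_expand]
  have h0 : gyhat x 0 = (2 * π * ‖x‖ ^ 2)⁻¹ * (-(x 1)) := by simp [gyhat]
  have h1 : gyhat x 1 = (2 * π * ‖x‖ ^ 2)⁻¹ * (x 0) := by simp [gyhat]
  rw [h0, h1]; ring

lemma inner_gradient (f : E2 → ℝ) (x v : E2) : ⟪gradient f x, v⟫ = fderiv ℝ f x v := by
  simp [gradient, InnerProductSpace.toDual_symm_apply]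

/-- The harmonic conjugate Ψ* of the regularised Green's function Ψ (harmonic in U with
Dirichlet data −(1/2π) log|s−x'|) satisfies the dislocation Neumann condition
∂Ψ*/∂ν = −∇ŷ(·−x')·ν at any boundary point of a flat edge of the convex domain U. -/
theorem stmt4
    (U : Set E2) (hUo : IsOpen U) (hUc : Convex ℝ U) (hUb : Bornology.IsBounded U)
    (x' : E2) (hx' : x' ∈ U)
    (V : Set E2) (hVo : IsOpen V) (hUV : closure U ⊆ V)
    (Ψ Ψs : E2 → ℝ)
    (hΨ : ContDiffOn ℝ 1 Ψ V) (hΨs : ContDiffOn ℝ 1 Ψs V)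
    -- Ψ is harmonic in U
    (hharm : ∀ x ∈ U,
      (fderivWithin ℝ (fun y => fderivWithin ℝ Ψ U y (EuclideanSpace.single 0 1)) U x)
        (EuclideanSpace.single 0 1) +
      (fderivWithin ℝ (fun y => fderivWithin ℝ Ψ U y (EuclideanSpace.single 1 1)) U x)
        (EuclideanSpace.single 1 1) = 0)
    -- Dirichlet boundary data of Ψ
    (hdir : ∀ s ∈ frontier U, Ψ s = -(1 / (2 * π)) * Real.log ‖s - x'‖)
    -- Cauchy–Riemann: ∇Ψ* = R₄ ∇Ψ in U (Ψ* a harmonic conjugate of Ψ)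
    (hCR : ∀ x ∈ U, gradient Ψs x = rotQ (gradient Ψ x))
    -- s is a boundary point on a flat edge with outward unit normal ν
    (s : E2) (hs : s ∈ frontier U) (ν : E2) (hν : ‖ν‖ = 1)
    (hout : ∀ y ∈ U, ⟪y - s, ν⟫ ≤ 0)
    (δ : ℝ) (hδ : 0 < δ)
    (hflat : ∀ x ∈ ball s δ, ⟪x - s, ν⟫ = 0 → x ∈ frontier U) :
    ⟪gradient Ψs s, ν⟫ = -⟪gyhat (s - x'), ν⟫ := by
  have hscl : s ∈ closure U := frontier_subset_closure hs
  have hsV : s ∈ V := hUV hscl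
  set τ : E2 := rotQ ν with hτdef
  have hτν : ⟪τ, ν⟫ = 0 := by
    simp [inner_expand, hτdef, rotQ]; ring
  have hττ : ‖τ‖ = 1 := by
    have h1 : ⟪τ, τ⟫ = ⟪ν, ν⟫ := by
      rw [inner_expand, inner_expand]
      have e0 : τ 0 = -(ν 1) := rfl
      have e1 : τ 1 = ν 0 := rfl
      rw [e0, e1]; ring
    have h2 : ‖τ‖ ^ 2 = ‖ν‖ ^ 2 := by
      rw [← real_inner_self_eq_norm_sq, ← real_inner_self_eq_norm_sq, h1]
    nlinarith [norm_nonneg τ, norm_nonneg ν]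
  -- s ∉ U, so s ≠ x'
  have hsU : s ∉ U := by
    rw [hUo.frontier_eq] at hs; exact hs.2
  have hsx : s - x' ≠ 0 := by
    intro h
    exact hsU (by rwa [sub_eq_zero.mp h])
  set c : E2 := s - x' with hcdef
  have hcn : (0:ℝ) < ‖c‖ := norm_pos_iff.mpr hsx
  have hc2 : (0:ℝ) < ‖c‖ ^ 2 := by positivity
  have hπ : (π:ℝ) ≠ 0 := Real.pi_ne_zero
  -- tangential derivative of Ψ at s equals that of the Dirichlet data
  have hΨdiff : DifferentiableAt ℝ Ψ s :=
    (hΨ.differentiableOn one_ne_zero).differentiableAt (hVo.mem_nhds hsV)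
  have hline : HasDerivAt (fun t : ℝ => s + t • τ) τ 0 := by
    simpa using ((hasDerivAt_id (0:ℝ)).smul_const τ).const_add s
  have hA : HasDerivAt (fun t : ℝ => Ψ (s + t • τ)) (fderiv ℝ Ψ s τ) 0 := by
    have h0 : HasFDerivAt Ψ (fderiv ℝ Ψ s) (s + (0:ℝ) • τ) := by
      simpa using hΨdiff.hasFDerivAt
    exact h0.comp_hasDerivAt 0 hline
  -- the closed form of the boundary data near t = 0
  have hq : HasDerivAt (fun t : ℝ => ‖c‖ ^ 2 + (2 * ⟪c, τ⟫ * t + t * t)) (2 * ⟪c, τ⟫) 0 := by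
    have h1 : HasDerivAt (fun t : ℝ => t * t) 0 0 := by
      simpa using (hasDerivAt_id' (0:ℝ)).fun_mul (hasDerivAt_id' 0)
    have h2 : HasDerivAt (fun t : ℝ => 2 * ⟪c, τ⟫ * t) (2 * ⟪c, τ⟫) 0 := by
      simpa using (hasDerivAt_id (0:ℝ)).const_mul (2 * ⟪c, τ⟫)
    simpa using (h2.add h1).const_add (‖c‖ ^ 2)
  have hq0 : (‖c‖ ^ 2 + (2 * ⟪c, τ⟫ * (0:ℝ) + (0:ℝ) * 0)) ≠ 0 := by
    simpa using hc2.ne'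
  have hB : HasDerivAt
      (fun t : ℝ => -(1 / (4 * π)) * Real.log (‖c‖ ^ 2 + (2 * ⟪c, τ⟫ * t + t * t)))
      (-(1 / (4 * π)) * (2 * ⟪c, τ⟫ / ‖c‖ ^ 2)) 0 := by
    have := (hq.log hq0).const_mul (-(1 / (4 * π)))
    simpa using this
  have heq : (fun t : ℝ => Ψ (s + t • τ)) =ᶠ[nhds 0]
      (fun t : ℝ => -(1 / (4 * π)) * Real.log (‖c‖ ^ 2 + (2 * ⟪c, τ⟫ * t + t * t))) := by
    filter_upwards [Metric.ball_mem_nhds (0:ℝ) hδ] with t ht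
    have hmem : s + t • τ ∈ ball s δ := by
      rw [mem_ball, dist_eq_norm]
      simpa [norm_smul, hττ] using (by simpa [Real.dist_eq] using ht : |t| < δ)
    have hinn : ⟪(s + t • τ) - s, ν⟫ = 0 := by
      have h' : (s + t • τ) - s = t • τ := by abel
      rw [h', real_inner_smul_left, hτν, mul_zero]
    have hfr := hflat _ hmem hinn
    have hval := hdir _ hfr
    rw [hval]
    have hw : s + t • τ - x' = c + t • τ := by
      rw [hcdef]; abel
    rw [hw]
    have hnorm : ‖c + t • τ‖ ^ 2 = ‖c‖ ^ 2 + (2 * ⟪c, τ⟫ * t + t * t) := by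
      rw [norm_add_sq_real, real_inner_smul_right, norm_smul]
      simp [hττ, sq_abs]
      ring
    rw [← hnorm, Real.log_pow]
    push_cast
    field_simp
    ring
  have hA' := hB.congr_of_eventuallyEq heq
  have hAB : fderiv ℝ Ψ s τ = -(1 / (4 * π)) * (2 * ⟪c, τ⟫ / ‖c‖ ^ 2) := hA.unique hA'
  -- extend CR relation to s by continuity
  have hcontΨ : ContinuousOn (fderiv ℝ Ψ) V := hΨ.continuousOn_fderiv_of_isOpen hVo le_rfl
  have hcontΨs : ContinuousOn (fderiv ℝ Ψs) V := hΨs.continuousOn_fderiv_of_isOpen hVo le_rfl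
  have hF : ContinuousAt (fun x => fderiv ℝ Ψs x ν) s :=
    (ContinuousLinearMap.apply ℝ ℝ ν).continuous.continuousAt.comp
      (hcontΨs.continuousAt (hVo.mem_nhds hsV))
  have hG : ContinuousAt (fun x => -(fderiv ℝ Ψ x τ)) s :=
    ((ContinuousLinearMap.apply ℝ ℝ τ).continuous.continuousAt.comp
      (hcontΨ.continuousAt (hVo.mem_nhds hsV))).neg
  haveI hne : (nhdsWithin s U).NeBot := mem_closure_iff_nhdsWithin_neBot.mp hscl
  have hFG : ∀ x ∈ U, fderiv ℝ Ψs x ν = -(fderiv ℝ Ψ x τ) := by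
    intro x hx
    have h1 : ⟪gradient Ψs x, ν⟫ = ⟪rotQ (gradient Ψ x), ν⟫ := by rw [hCR x hx]
    rw [inner_gradient] at h1
    rw [h1, inner_expand]
    have : -(fderiv ℝ Ψ x τ) = -⟪gradient Ψ x, τ⟫ := by rw [inner_gradient]
    rw [this, inner_expand]
    simp [rotQ, hτdef]
  have hkey : fderiv ℝ Ψs s ν = -(fderiv ℝ Ψ s τ) := by
    refine tendsto_nhds_unique (l := nhdsWithin s U)
      (hF.tendsto.mono_left nhdsWithin_le_nhds) ?_
    refine Filter.Tendsto.congr' ?_ (hG.tendsto.mono_left nhdsWithin_le_nhds)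
    filter_upwards [self_mem_nhdsWithin] with x hx
    exact (hFG x hx).symm
  rw [inner_gradient, hkey, hAB, gyhat_inner]
  have hτ0 : τ 0 = -(ν 1) := rfl
  have hτ1 : τ 1 = ν 0 := rfl
  rw [inner_expand, hτ0, hτ1]
  field_simp
  ring
end
end
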